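/- Suppose for all t ∈ [0,T] the function y(t) = ‖y(t,·;v)‖ satisfies y(t) > 0 and d/dt(1/y) − (1/y) ≥ β e^{-15t}, with y(0) = ‖v‖. Then y(t) ≤ ‖v‖ e^{-t} / (1 + (β/16)‖v‖(1 − e^{-16t})) for all t ∈ (0,T). -/

import Mathlib

/-- if y > 0, y(0) = ‖v‖ and (1/y)'(t) − 1/y(t) ≥ βe^{-15t} on [0,T], then
y(t) ≤ ‖v‖e^{-t}/(1 + (β/16)‖v‖(1 − e^{-16t})) on (0,T). -/
theorem stmt13 (T β nv : ℝ) (hT : 0 < T) (hβ : 0 < β) (hnv : 0 < nv)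
    (y g : ℝ → ℝ)
    (hpos : ∀ t ∈ Set.Icc (0:ℝ) T, 0 < y t)
    (hd : ∀ t ∈ Set.Icc (0:ℝ) T, HasDerivAt (fun s => 1 / y s) (g t) t)
    (hineq : ∀ t ∈ Set.Icc (0:ℝ) T, g t - 1 / y t ≥ β * Real.exp (-15*t))
    (hy0 : y 0 = nv) :
    ∀ t ∈ Set.Ioo (0:ℝ) T,
      y t ≤ nv * Real.exp (-t) / (1 + β/16 * nv * (1 - Real.exp (-16*t))) := by
  intro t ht
  obtain ⟨ht0, htT⟩ := ht
  set F : ℝ → ℝ := fun s => Real.exp (-s) * (1 / y s) - β/16 * (1 - Real.exp (-16*s)) with hF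
  have hderiv : ∀ s ∈ Set.Icc (0:ℝ) T, HasDerivAt F
      (Real.exp (-s) * (g s - 1/y s) - β * Real.exp (-16*s)) s := by
    intro s hs
    have h1 : HasDerivAt (fun u : ℝ => Real.exp (-u)) (-Real.exp (-s)) s := by
      have h0 := (Real.hasDerivAt_exp (-s)).comp s (hasDerivAt_neg s)
      simp only [mul_neg, mul_one] at h0
      exact h0
    have h2 := h1.mul (hd s hs)
    have h3 : HasDerivAt (fun u : ℝ => Real.exp (-16*u)) (-16 * Real.exp (-16*s)) s := by
      have h := ((hasDerivAt_id s).const_mul (-16 : ℝ)).exp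
      simpa [mul_comm] using h
    have h4 : HasDerivAt (fun u : ℝ => β/16 * (1 - Real.exp (-16*u)))
        (β/16 * (0 - (-16 * Real.exp (-16*s)))) s :=
      ((hasDerivAt_const s (1:ℝ)).sub h3).const_mul (β/16)
    have h5 := h2.sub h4
    exact h5.congr_deriv (by ring)
  have hcont : ContinuousOn F (Set.Icc 0 T) := fun s hs =>
    (hderiv s hs).continuousAt.continuousWithinAt
  have hmono : MonotoneOn F (Set.Icc 0 T) := by
    apply monotoneOn_of_deriv_nonneg (convex_Icc 0 T) hcont
    · intro s hs
      rw [interior_Icc] at hs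
      exact (hderiv s ⟨hs.1.le, hs.2.le⟩).differentiableAt.differentiableWithinAt
    · intro s hs
      rw [interior_Icc] at hs
      have hs' : s ∈ Set.Icc (0:ℝ) T := ⟨hs.1.le, hs.2.le⟩
      rw [(hderiv s hs').deriv]
      have h1 : g s - 1/y s ≥ β * Real.exp (-15*s) := hineq s hs'
      have hkey : Real.exp (-s) * Real.exp (-15*s) = Real.exp (-16*s) := by
        rw [← Real.exp_add]; ring_nf
      nlinarith [Real.exp_pos (-s), Real.exp_pos (-16*s), Real.exp_pos (-15*s),
        mul_le_mul_of_nonneg_left h1 (Real.exp_pos (-s)).le]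
  have hFt : F 0 ≤ F t :=
    hmono ⟨le_refl 0, hT.le⟩ ⟨ht0.le, htT.le⟩ ht0.le
  have hF0 : F 0 = 1 / nv := by
    simp [hF, hy0]
  have hy := hpos t ⟨ht0.le, htT.le⟩
  have hexple : Real.exp (-16*t) ≤ 1 := by
    rw [Real.exp_le_one_iff]
    nlinarith
  have hnn : nv * (1/nv) = 1 := by field_simp
  have hDy : (1/nv + β/16 * (1 - Real.exp (-16*t))) * y t ≤ Real.exp (-t) := by
    have h6 : 1/nv + β/16 * (1 - Real.exp (-16*t)) ≤ Real.exp (-t) * (1 / y t) := by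
      have := hF0 ▸ hFt
      simp only [hF] at this
      linarith
    have h7 := mul_le_mul_of_nonneg_right h6 hy.le
    have h8 : Real.exp (-t) * (1 / y t) * y t = Real.exp (-t) := by
      field_simp
    linarith [h8 ▸ h7]
  have hB : (0:ℝ) < 1 + β/16 * nv * (1 - Real.exp (-16*t)) := by
    have h9 : 0 ≤ β/16 * nv * (1 - Real.exp (-16*t)) :=
      mul_nonneg (by positivity) (by linarith)
    linarith
  rw [le_div_iff₀ hB]
  nlinarith [mul_le_mul_of_nonneg_left hDy hnv.le]
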